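/- (Existence of maximal contact in characteristic zero.) Let k be a field of characteristic zero, I a nonzero ideal of R = k[x_1,…,x_n], and p ∈ k^n a point with ord_p(I) = a ≥ 1. Then there exist an element x ∈ D^{a-1}(I) and an index i such that x(p) = 0 and (∂x/∂x_i)(p) ≠ 0; in particular x is a maximal contact element for I at p, i.e. an element of the maximal contact ideal D^{a-1}(I) one of whose first partial derivatives does not vanish at p. -/

import Mathlib

open MvPolynomial

/-- The derivative ideal: the ideal generated by `I` together with all first partial
derivatives of its elements. -/
noncomputable def derivIdeal {k : Type*} [CommSemiring k] {σ : Type*}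
    (I : Ideal (MvPolynomial σ k)) : Ideal (MvPolynomial σ k) :=
  I ⊔ Ideal.span {g | ∃ f ∈ I, ∃ i : σ, g = pderiv i f}

/-- The order of a nonzero polynomial at a point `p`: the smallest total degree of a monomial
appearing in the shifted polynomial `f(x+p)`. -/
noncomputable def polyOrdAt {k : Type*} [CommSemiring k] {σ : Type*} (p : σ → k)
    (f : MvPolynomial σ k) : ℕ :=
  sInf {m | ∃ d ∈ (aeval (fun i => X i + C (p i)) f : MvPolynomial σ k).support,
    (d.sum fun _ e => e) = m}

/-- The order of a nonzero ideal at a point: `min {ord_p f : 0 ≠ f ∈ I}`. -/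
noncomputable def idealOrdAt {k : Type*} [CommSemiring k] {σ : Type*} (p : σ → k)
    (I : Ideal (MvPolynomial σ k)) : ℕ :=
  sInf {m | ∃ f ∈ I, f ≠ 0 ∧ polyOrdAt p f = m}

section Aux

variable {k : Type*} {σ : Type*}

/-- The order of a polynomial "at the origin": the smallest total degree of a monomial
in its support. -/
noncomputable def ord0 [CommSemiring k] (g : MvPolynomial σ k) : ℕ :=
  sInf {m | ∃ d ∈ g.support, (d.sum fun _ e => e) = m}

lemma polyOrdAt_eq_ord0 [CommSemiring k] (p : σ → k) (f : MvPolynomial σ k) :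
    polyOrdAt p f = ord0 (aeval (fun i => X i + C (p i)) f : MvPolynomial σ k) := rfl

lemma coeff_pderiv' [CommSemiring k] [DecidableEq σ] (i : σ) (u : σ →₀ ℕ)
    (g : MvPolynomial σ k) :
    coeff u (pderiv i g) = (u i + 1 : ℕ) * coeff (u + Finsupp.single i 1) g := by
  induction g using MvPolynomial.induction_on' with
  | monomial s a =>
    rw [pderiv_monomial, coeff_monomial, coeff_monomial]
    by_cases hs : s = u + Finsupp.single i 1
    · subst hs
      have h1 : u + Finsupp.single i 1 - Finsupp.single i 1 = u :=
        add_tsub_cancel_right u (Finsupp.single i 1)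
      have h2 : (u + Finsupp.single i 1 : σ →₀ ℕ) i = u i + 1 := by simp
      rw [if_pos h1, h2, if_pos rfl]
      push_cast
      ring
    · rw [if_neg hs]
      by_cases hsi : s i = 0
      · split_ifs with h
        · simp [hsi]
        · ring
      · have hne : s - Finsupp.single i 1 ≠ u := by
          intro h
          apply hs
          rw [← h, tsub_add_cancel_of_le]
          rw [Finsupp.single_le_iff]
          omega
        rw [if_neg hne, mul_zero]
  | add f g hf hg =>
    simp [hf, hg, mul_add]

lemma mem_support_pderiv_iff {k : Type*} [Field k] [CharZero k] [DecidableEq σ] (i : σ)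
    (u : σ →₀ ℕ) (g : MvPolynomial σ k) :
    u ∈ (pderiv i g).support ↔ u + Finsupp.single i 1 ∈ g.support := by
  simp only [MvPolynomial.mem_support_iff, coeff_pderiv' i u g]
  constructor
  · intro h hc; exact h (by rw [hc, mul_zero])
  · intro h hc
    rcases mul_eq_zero.mp hc with h1 | h1
    · exact absurd h1 (by exact_mod_cast Nat.succ_ne_zero (u i))
    · exact h h1

lemma sum_eq_one_single [DecidableEq σ] {d : σ →₀ ℕ} (h : (d.sum fun _ e => e) = 1) :
    ∃ i, d = Finsupp.single i 1 := by
  have hd : d ≠ 0 := by rintro rfl; simp [Finsupp.sum] at h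
  obtain ⟨i, hi⟩ := Finsupp.support_nonempty_iff.mpr hd
  have hdi : 1 ≤ d i := Nat.one_le_iff_ne_zero.mpr (Finsupp.mem_support_iff.mp hi)
  refine ⟨i, ?_⟩
  have hsum : (d.sum fun _ e => e) = ∑ j ∈ d.support, d j := rfl
  rw [hsum] at h
  ext j
  rcases eq_or_ne j i with rfl | hji
  · have hle : d j ≤ ∑ x ∈ d.support, d x :=
      Finset.single_le_sum (fun _ _ => Nat.zero_le _) hi
    simp only [Finsupp.single_eq_same]
    omega
  · rw [Finsupp.single_eq_of_ne hji]
    by_contra hj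
    have hjmem : j ∈ d.support := Finsupp.mem_support_iff.mpr hj
    have hpair : ({i, j} : Finset σ) ⊆ d.support := by
      intro x hx
      rcases Finset.mem_insert.mp hx with rfl | hx
      · exact hi
      · rwa [Finset.mem_singleton.mp hx]
    have hle : d i + d j ≤ ∑ x ∈ d.support, d x := by
      calc d i + d j = ∑ x ∈ ({i, j} : Finset σ), d x := by
            rw [Finset.sum_pair (Ne.symm hji)]
        _ ≤ ∑ x ∈ d.support, d x :=
            Finset.sum_le_sum_of_subset hpair
    omega

/-- Key step: if `ord0 g = m ≥ 1` then some partial derivative of `g` is nonzero and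
has order `m - 1` at the origin. -/
lemma ord0_pderiv {k : Type*} [Field k] [CharZero k] [DecidableEq σ]
    {g : MvPolynomial σ k} (hg : g ≠ 0) {m : ℕ} (hm : 1 ≤ m) (h : ord0 g = m) :
    ∃ i : σ, pderiv i g ≠ 0 ∧ ord0 (pderiv i g) = m - 1 := by
  have hne : {m | ∃ d ∈ g.support, (d.sum fun _ e => e) = m}.Nonempty := by
    obtain ⟨d, hd⟩ := support_nonempty.mpr hg
    exact ⟨_, d, hd, rfl⟩
  have hmem := Nat.sInf_mem hne
  rw [show sInf {m | ∃ d ∈ g.support, (d.sum fun _ e => e) = m} = ord0 g from rfl, h] at hmem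
  obtain ⟨d, hd, hdm⟩ := hmem
  have hdne : d ≠ 0 := by rintro rfl; simp [Finsupp.sum] at hdm; omega
  obtain ⟨i, hi⟩ := Finsupp.support_nonempty_iff.mpr hdne
  have hdi : 1 ≤ d i := Nat.one_le_iff_ne_zero.mpr (Finsupp.mem_support_iff.mp hi)
  have hu : d - Finsupp.single i 1 ∈ (pderiv i g).support := by
    rw [mem_support_pderiv_iff, tsub_add_cancel_of_le (Finsupp.single_le_iff.mpr hdi)]
    exact hd
  have hadd : ∀ (x y : σ →₀ ℕ), ((x + y).sum fun _ e => e)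
      = (x.sum fun _ e => e) + (y.sum fun _ e => e) := fun x y =>
    Finsupp.sum_add_index' (fun _ => rfl) (fun _ _ _ => rfl)
  have hsingle : ((Finsupp.single i 1 : σ →₀ ℕ).sum fun _ e => e) = 1 :=
    Finsupp.sum_single_index rfl
  have husum : ((d - Finsupp.single i 1).sum fun _ e => e) = m - 1 := by
    have h1 : ((d - Finsupp.single i 1) + Finsupp.single i 1) = d :=
      tsub_add_cancel_of_le (Finsupp.single_le_iff.mpr hdi)
    have h2 := congrArg (fun x : σ →₀ ℕ => x.sum fun _ e => e) h1
    rw [hadd, hsingle] at h2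
    omega
  refine ⟨i, support_nonempty.mp ⟨_, hu⟩, ?_⟩
  apply le_antisymm
  · exact Nat.sInf_le ⟨_, hu, husum⟩
  · apply le_csInf
    · exact ⟨m - 1, ⟨_, hu, husum⟩⟩
    rintro b ⟨u, hu', rfl⟩
    have hmemg := (mem_support_pderiv_iff i u g).mp hu'
    have hge : m ≤ ((u + Finsupp.single i 1).sum fun _ e => e) := by
      have := Nat.sInf_le (s := {m | ∃ d ∈ g.support, (d.sum fun _ e => e) = m})
        ⟨_, hmemg, rfl⟩
      rw [show sInf {m | ∃ d ∈ g.support, (d.sum fun _ e => e) = m} = ord0 g from rfl, h] at this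
      exact this
    rw [hadd, hsingle] at hge
    omega

lemma pderiv_shift [CommSemiring k] [DecidableEq σ] (p : σ → k) (i : σ)
    (f : MvPolynomial σ k) :
    pderiv i (aeval (fun j => X j + C (p j)) f : MvPolynomial σ k)
      = aeval (fun j => X j + C (p j)) (pderiv i f) := by
  induction f using MvPolynomial.induction_on with
  | C a => simp [aeval_C, algebraMap_eq]
  | add f g hf hg =>
    rw [aeval_eq_bind₁] at hf hg ⊢
    simp [map_add, hf, hg]
  | mul_X f j hf =>
    rw [aeval_eq_bind₁] at hf ⊢
    by_cases hij : j = i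
    · subst hij
      simp [pderiv_mul, map_add, map_mul, hf, pderiv_X_self, pderiv_C]
    · simp [pderiv_mul, map_add, map_mul, hf, pderiv_X_of_ne hij, pderiv_C]

lemma shift_ne_zero [CommRing k] (p : σ → k) {f : MvPolynomial σ k} (hf : f ≠ 0) :
    (aeval (fun j => X j + C (p j)) f : MvPolynomial σ k) ≠ 0 := by
  intro h
  apply hf
  have hcomp : (aeval (fun j => X j - C (p j)) : MvPolynomial σ k →ₐ[k] MvPolynomial σ k).comp
      (aeval (fun j => X j + C (p j))) = AlgHom.id k _ := by
    apply MvPolynomial.algHom_ext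
    intro i
    simp [aeval_X, aeval_C, algebraMap_eq]
  have := congrArg (aeval (fun j => X j - C (p j)) : MvPolynomial σ k →ₐ[k] MvPolynomial σ k) h
  rw [← AlgHom.comp_apply, hcomp] at this
  simpa using this

lemma eval_eq_constantCoeff_shift [CommSemiring k] (p : σ → k) (f : MvPolynomial σ k) :
    eval p f = constantCoeff (aeval (fun j => X j + C (p j)) f : MvPolynomial σ k) := by
  induction f using MvPolynomial.induction_on with
  | C a => simp [aeval_C, algebraMap_eq]
  | add f g hf hg => simp [map_add, hf, hg]
  | mul_X f j hf => simp [map_mul, hf, aeval_X]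

lemma constantCoeff_pderiv [CommSemiring k] [DecidableEq σ] (i : σ) (g : MvPolynomial σ k) :
    constantCoeff (pderiv i g) = coeff (Finsupp.single i 1) g := by
  rw [constantCoeff_eq]
  have := coeff_pderiv' i 0 g
  simpa using this

/-- Membership of a partial derivative in the derivative ideal. -/
lemma pderiv_mem_derivIdeal [CommSemiring k] {J : Ideal (MvPolynomial σ k)}
    {f : MvPolynomial σ k} (hf : f ∈ J) (i : σ) : pderiv i f ∈ derivIdeal J :=
  Ideal.mem_sup_right (Ideal.subset_span ⟨f, hf, i, rfl⟩)

/-- Iterating derivatives drops the order down to `1`. -/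
lemma exists_ord_one {k : Type*} [Field k] [CharZero k] [DecidableEq σ] (p : σ → k) :
    ∀ (b : ℕ) (J : Ideal (MvPolynomial σ k)) (f : MvPolynomial σ k), f ∈ J → f ≠ 0 →
      polyOrdAt p f = b + 1 →
      ∃ x ∈ derivIdeal^[b] J, x ≠ 0 ∧ polyOrdAt p x = 1 := by
  intro b
  induction b with
  | zero => intro J f hfJ hf0 hord; exact ⟨f, hfJ, hf0, hord⟩
  | succ b ih =>
    intro J f hfJ hf0 hord
    rw [polyOrdAt_eq_ord0] at hord
    obtain ⟨i, hne, hord'⟩ := ord0_pderiv (shift_ne_zero p hf0) (by omega) hord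
    rw [pderiv_shift] at hne hord'
    have hf0' : pderiv i f ≠ 0 := by
      intro h; rw [h, map_zero] at hne; exact hne rfl
    have hord'' : polyOrdAt p (pderiv i f) = b + 1 := by
      rw [polyOrdAt_eq_ord0, hord']; omega
    obtain ⟨x, hx, hx0, hx1⟩ :=
      ih (derivIdeal J) (pderiv i f) (pderiv_mem_derivIdeal hfJ i) hf0' hord''
    rw [← Function.iterate_succ_apply] at hx
    exact ⟨x, hx, hx0, hx1⟩

end Aux

/-- Existence of maximal contact in characteristic zero: if `ord_p(I) = a ≥ 1`, then there is
an element `x` of the maximal contact ideal `D^{a-1}(I)` vanishing at `p`, one of whose first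
partial derivatives does not vanish at `p`. -/
theorem exists_maximal_contact {k : Type*} [Field k] [CharZero k] {n : ℕ}
    (I : Ideal (MvPolynomial (Fin n) k)) (hI : I ≠ ⊥) (p : Fin n → k) (a : ℕ)
    (ha : 1 ≤ a) (hord : idealOrdAt p I = a) :
    ∃ x ∈ derivIdeal^[a - 1] I, ∃ i : Fin n,
      eval p x = 0 ∧ eval p (pderiv i x) ≠ 0 := by
  -- the infimum defining `idealOrdAt` is attained
  have hne : {m | ∃ f ∈ I, f ≠ 0 ∧ polyOrdAt p f = m}.Nonempty := by
    obtain ⟨f, hfI, hf0⟩ := Submodule.exists_mem_ne_zero_of_ne_bot hI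
    exact ⟨_, f, hfI, hf0, rfl⟩
  have hmem := Nat.sInf_mem hne
  rw [show sInf {m | ∃ f ∈ I, f ≠ 0 ∧ polyOrdAt p f = m} = idealOrdAt p I from rfl,
    hord] at hmem
  obtain ⟨f, hfI, hf0, hford⟩ := hmem
  -- iterate derivatives to reach order 1
  obtain ⟨x, hx, hx0, hx1⟩ := exists_ord_one p (a - 1) I f hfI hf0 (by rw [hford]; omega)
  refine ⟨x, hx, ?_⟩
  set g : MvPolynomial (Fin n) k := aeval (fun i => X i + C (p i)) x with hg
  have hx1' : ord0 g = 1 := by rw [← polyOrdAt_eq_ord0]; exact hx1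
  -- the infimum defining `ord0 g` is attained
  have hgne : {m | ∃ d ∈ g.support, (d.sum fun _ e => e) = m}.Nonempty := by
    obtain ⟨d, hd⟩ := support_nonempty.mpr (shift_ne_zero p hx0)
    exact ⟨_, d, hd, rfl⟩
  have hgmem := Nat.sInf_mem hgne
  rw [show sInf {m | ∃ d ∈ g.support, (d.sum fun _ e => e) = m} = ord0 g from rfl,
    hx1'] at hgmem
  obtain ⟨d, hd, hd1⟩ := hgmem
  obtain ⟨i, rfl⟩ := sum_eq_one_single hd1
  refine ⟨i, ?_, ?_⟩
  · -- `x(p) = 0` since the order at `p` is positive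
    rw [eval_eq_constantCoeff_shift p x, ← hg, constantCoeff_eq]
    by_contra hc
    have h0 : (0 : Fin n →₀ ℕ) ∈ g.support := MvPolynomial.mem_support_iff.mpr hc
    have : ord0 g ≤ 0 := Nat.sInf_le ⟨0, h0, by simp [Finsupp.sum]⟩
    omega
  · -- the `i`-th partial derivative of `x` does not vanish at `p`
    rw [eval_eq_constantCoeff_shift p (pderiv i x), ← pderiv_shift, ← hg,
      constantCoeff_pderiv]
    exact MvPolynomial.mem_support_iff.mp hd
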